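/- Let F_ℓ be the set of violating edges of f both of whose endpoints are ℓ-sticky. For a length-ℓ random walk from a uniform start, the probability that the walk traverses some edge of F_ℓ and traverses no other influential edge is at least (ℓ/(4n)) · |F_ℓ|/2^n. -/

import Mathlib

open Finset

open scoped Classical

/-- Vertices of the hypercube `{0,1}^n`. -/
abbrev Cube (n : ℕ) := Fin n → Bool

/-- Flip coordinate `i` of `x`. -/
def flipCoord {n : ℕ} (x : Cube n) (i : Fin n) : Cube n := Function.update x i (!(x i))

/-- Position after `t` steps of the walk starting at `x` with step list `w`. -/
def posAt {n : ℕ} (x : Cube n) (w : List (Fin n)) (t : ℕ) : Cube n :=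
  (w.take t).foldl flipCoord x

/-- The `t`-th traversed edge (0-indexed) of the walk is influential. -/
def influentialStep {n : ℕ} (f : Cube n → Bool) (x : Cube n) (w : List (Fin n)) (t : ℕ) : Prop :=
  f (posAt x w t) ≠ f (posAt x w (t + 1))

/-- The walk from `x` with steps `w` traverses some influential edge. -/
def hits {n : ℕ} (f : Cube n → Bool) (x : Cube n) {ℓ : ℕ} (w : Fin ℓ → Fin n) : Prop :=
  ∃ t, t < ℓ ∧ influentialStep f x (List.ofFn w) t

/-- `x` is `ℓ`-sticky: a uniform length-`ℓ` walk from `x` avoids influential edges w.p. ≥ 1/2. -/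
def sticky {n : ℕ} (f : Cube n → Bool) (ℓ : ℕ) (x : Cube n) : Prop :=
  (1 / 2 : ℝ) ≤ ((univ.filter fun w : Fin ℓ → Fin n => ¬ hits f x w).card : ℝ) / (n : ℝ) ^ ℓ

/-- Total influence `I(f) = n · Pr[f x ≠ f y]` over uniform ordered Hamming-distance-1 pairs. -/
noncomputable def totalInfluence (n : ℕ) (f : Cube n → Bool) : ℝ :=
  (n : ℝ) * (((univ.filter fun p : Cube n × Cube n =>
      hammingDist p.1 p.2 = 1 ∧ f p.1 ≠ f p.2).card : ℝ) / ((n : ℝ) * 2 ^ n))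

/-- `p` is a violating (directed upward) edge: `p.1 ≺ p.2`, `f p.1 = 1`, `f p.2 = 0`. -/
def violating {n : ℕ} (f : Cube n → Bool) (p : Cube n × Cube n) : Prop :=
  hammingDist p.1 p.2 = 1 ∧ p.1 ≤ p.2 ∧ f p.1 = true ∧ f p.2 = false

/-- The set `F_ℓ` of violating edges both of whose endpoints are `ℓ`-sticky. -/
noncomputable def Fset {n : ℕ} (f : Cube n → Bool) (ℓ : ℕ) : Finset (Cube n × Cube n) :=
  univ.filter fun p => violating f p ∧ sticky f ℓ p.1 ∧ sticky f ℓ p.2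

/-- The `t`-th traversed edge of the walk equals the (undirected) edge `q`. -/
def matchAt {n : ℕ} (x : Cube n) (w : List (Fin n)) (t : ℕ) (q : Cube n × Cube n) : Prop :=
  (posAt x w t = q.1 ∧ posAt x w (t + 1) = q.2) ∨
  (posAt x w t = q.2 ∧ posAt x w (t + 1) = q.1)
lemma flipCoord_flip_flip {n : ℕ} (x : Cube n) (i : Fin n) : flipCoord (flipCoord x i) i = x := by
  funext j
  by_cases h : j = i
  · subst h; simp [flipCoord]
  · simp [flipCoord, Function.update, h]

lemma posAt_zero {n : ℕ} (x : Cube n) (w : List (Fin n)) : posAt x w 0 = x := rfl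

lemma posAt_succ {n ℓ : ℕ} (x : Cube n) (w : Fin ℓ → Fin n) (t : ℕ) (ht : t < ℓ) :
    posAt x (List.ofFn w) (t + 1) = flipCoord (posAt x (List.ofFn w) t) (w ⟨t, ht⟩) := by
  have hlen : t < (List.ofFn w).length := by simpa using ht
  rw [posAt, posAt, List.take_succ, List.getElem?_eq_getElem hlen, List.getElem_ofFn]
  simp

lemma hamming_flip {n : ℕ} {x y : Cube n} (h : hammingDist x y = 1) :
    ∃ i, y = flipCoord x i ∧ (∀ j, j ≠ i → x j = y j) := by
  have h' : (univ.filter fun i => x i ≠ y i).card = 1 := by rw [← h, hammingDist]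
  obtain ⟨i0, hi⟩ := Finset.card_eq_one.mp h'
  have hmem : ∀ j : Fin n, x j ≠ y j ↔ j = i0 := by
    intro j
    constructor
    · intro hj
      have : j ∈ (univ.filter fun i => x i ≠ y i) := by simp [hj]
      rw [hi] at this; simpa using this
    · rintro rfl
      have : j ∈ (univ.filter fun i => x i ≠ y i) := by rw [hi]; simp
      simpa using this
  refine ⟨i0, ?_, ?_⟩
  · funext j
    by_cases hj : j = i0
    · subst hj
      have : x j ≠ y j := (hmem j).mpr rfl
      simp only [flipCoord, Function.update_self]
      revert this; cases x j <;> cases y j <;> simp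
    · have : x j = y j := by
        by_contra hc; exact hj ((hmem j).mp hc)
      simp [flipCoord, Function.update, hj, ← this]
  · intro j hj
    by_contra hc; exact hj ((hmem j).mp hc)

def mkW {n ℓ : ℕ} (t : ℕ) (ht : t < ℓ) (i : Fin n) (a b : Fin ℓ → Fin n) : Fin ℓ → Fin n :=
  fun s => if hs : s.val < t then a ⟨t - 1 - s.val, by omega⟩
           else if s.val = t then i else b ⟨s.val - t - 1, by omega⟩

lemma mkW_lt {n ℓ : ℕ} (t : ℕ) (ht : t < ℓ) (i : Fin n) (a b : Fin ℓ → Fin n)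
    (s : Fin ℓ) (hs : s.val < t) : mkW t ht i a b s = a ⟨t - 1 - s.val, by omega⟩ := by
  simp [mkW, hs]

lemma mkW_eq {n ℓ : ℕ} (t : ℕ) (ht : t < ℓ) (i : Fin n) (a b : Fin ℓ → Fin n)
    (s : Fin ℓ) (hs : s.val = t) : mkW t ht i a b s = i := by
  simp [mkW, hs]

lemma mkW_gt {n ℓ : ℕ} (t : ℕ) (ht : t < ℓ) (i : Fin n) (a b : Fin ℓ → Fin n)
    (s : Fin ℓ) (hs : t < s.val) : mkW t ht i a b s = b ⟨s.val - t - 1, by omega⟩ := by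
  have h1 : ¬ s.val < t := by omega
  have h2 : ¬ s.val = t := by omega
  simp [mkW, h1, h2]

lemma mkW_prefix {n ℓ : ℕ} (t : ℕ) (ht : t < ℓ) (i : Fin n) (a b : Fin ℓ → Fin n)
    (e₁ : Cube n) :
    ∀ s, s ≤ t → posAt (posAt e₁ (List.ofFn a) t) (List.ofFn (mkW t ht i a b)) s
      = posAt e₁ (List.ofFn a) (t - s) := by
  intro s
  induction s with
  | zero => intro _; simp [posAt_zero]
  | succ s ih =>
    intro hs
    have hst : s < t := by omega
    have hsl : s < ℓ := by omega
    rw [posAt_succ _ _ s hsl, ih (le_of_lt hst), mkW_lt t ht i a b ⟨s, hsl⟩ hst]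
    have h1 : t - s = (t - 1 - s) + 1 := by omega
    have h2 : t - 1 - s < ℓ := by omega
    rw [h1, posAt_succ _ _ _ h2, flipCoord_flip_flip]
    have h3 : t - 1 - s = t - (s + 1) := by omega
    rw [h3]

lemma mkW_at_t {n ℓ : ℕ} (t : ℕ) (ht : t < ℓ) (i : Fin n) (a b : Fin ℓ → Fin n)
    (e₁ : Cube n) :
    posAt (posAt e₁ (List.ofFn a) t) (List.ofFn (mkW t ht i a b)) t = e₁ := by
  have := mkW_prefix t ht i a b e₁ t le_rfl
  simpa [posAt_zero] using this

lemma mkW_suffix {n ℓ : ℕ} (t : ℕ) (ht : t < ℓ) (i : Fin n) (a b : Fin ℓ → Fin n)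
    (e₁ : Cube n) :
    ∀ j, t + 1 + j ≤ ℓ → posAt (posAt e₁ (List.ofFn a) t) (List.ofFn (mkW t ht i a b)) (t + 1 + j)
      = posAt (flipCoord e₁ i) (List.ofFn b) j := by
  intro j
  induction j with
  | zero =>
    intro _
    rw [posAt_zero]
    have : t + 1 + 0 = t + 1 := rfl
    rw [this, posAt_succ _ _ t ht, mkW_at_t, mkW_eq t ht i a b ⟨t, ht⟩ rfl]
  | succ j ih =>
    intro hj
    have hjl : t + 1 + j < ℓ := by omega
    have hjl' : j < ℓ := by omega
    have h1 : t + 1 + (j + 1) = (t + 1 + j) + 1 := by omega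
    rw [h1, posAt_succ _ _ _ hjl, ih (by omega), posAt_succ _ _ j hjl',
      mkW_gt t ht i a b ⟨t + 1 + j, hjl⟩ (by simp; omega)]
    have h3 : (⟨(⟨t + 1 + j, hjl⟩ : Fin ℓ).val - t - 1, by omega⟩ : Fin ℓ) = ⟨j, hjl'⟩ :=
      Fin.ext (by simp; omega)
    rw [h3]

lemma mkW_infl_prefix {n ℓ : ℕ} (f : Cube n → Bool) (t : ℕ) (ht : t < ℓ) (i : Fin n)
    (a b : Fin ℓ → Fin n) (e₁ : Cube n) (s : ℕ) (hs : s < t) :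
    influentialStep f (posAt e₁ (List.ofFn a) t) (List.ofFn (mkW t ht i a b)) s ↔
    influentialStep f e₁ (List.ofFn a) (t - 1 - s) := by
  have h1 := mkW_prefix t ht i a b e₁ s (by omega)
  have h2 := mkW_prefix t ht i a b e₁ (s + 1) (by omega)
  have h3 : t - s = (t - 1 - s) + 1 := by omega
  have h4 : t - (s + 1) = t - 1 - s := by omega
  rw [influentialStep, influentialStep, h1, h2, h3, h4, ne_comm]

lemma mkW_infl_suffix {n ℓ : ℕ} (f : Cube n → Bool) (t : ℕ) (ht : t < ℓ) (i : Fin n)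
    (a b : Fin ℓ → Fin n) (e₁ : Cube n) (s : ℕ) (hs1 : t < s) (hs2 : s < ℓ) :
    influentialStep f (posAt e₁ (List.ofFn a) t) (List.ofFn (mkW t ht i a b)) s ↔
    influentialStep f (flipCoord e₁ i) (List.ofFn b) (s - t - 1) := by
  have h1 : t + 1 + (s - t - 1) = s := by omega
  have h2 : t + 1 + (s - t) = s + 1 := by omega
  have e1 := mkW_suffix t ht i a b e₁ (s - t - 1) (by omega)
  have e2 := mkW_suffix t ht i a b e₁ (s - t) (by omega)
  rw [h1] at e1; rw [h2] at e2
  have h3 : s - t = (s - t - 1) + 1 := by omega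
  rw [influentialStep, influentialStep, e1, e2, h3]
  simp

noncomputable def Sset {n : ℕ} (f : Cube n → Bool) (ℓ : ℕ) (q : Cube n × Cube n) (t : ℕ)
    (d : Bool) : Finset (Cube n × (Fin ℓ → Fin n)) :=
  univ.filter fun p =>
    posAt p.1 (List.ofFn p.2) t = (if d then q.1 else q.2) ∧
    posAt p.1 (List.ofFn p.2) (t + 1) = (if d then q.2 else q.1) ∧
    ∀ s, s < ℓ → s ≠ t → ¬ influentialStep f p.1 (List.ofFn p.2) s

lemma sticky_count {n ℓ : ℕ} (hn : 0 < n) {f : Cube n → Bool} {x : Cube n}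
    (hs : sticky f ℓ x) (m : ℕ) (hm : m ≤ ℓ) :
    (n : ℝ) ^ ℓ / 2 ≤
      ((univ.filter fun w : Fin ℓ → Fin n => ∀ s, s < m → ¬ influentialStep f x (List.ofFn w) s).card : ℝ) := by
  have hpos : (0 : ℝ) < (n : ℝ) ^ ℓ := by positivity
  have h1 : (n : ℝ) ^ ℓ / 2 ≤ ((univ.filter fun w : Fin ℓ → Fin n => ¬ hits f x w).card : ℝ) := by
    rw [sticky] at hs
    have := (le_div_iff₀ hpos).mp hs
    linarith
  refine h1.trans ?_
  have : (univ.filter fun w : Fin ℓ → Fin n => ¬ hits f x w) ⊆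
      (univ.filter fun w : Fin ℓ → Fin n => ∀ s, s < m → ¬ influentialStep f x (List.ofFn w) s) := by
    intro w hw
    simp only [mem_filter, mem_univ, true_and] at hw ⊢
    intro s hsm hinfl
    exact hw ⟨s, lt_of_lt_of_le hsm hm, hinfl⟩
  exact_mod_cast Nat.cast_le.mpr (Finset.card_le_card this)

lemma Sset_card {n ℓ : ℕ} (hn : 0 < n) (f : Cube n → Bool) (q : Cube n × Cube n)
    (hq : q ∈ Fset f ℓ) (t : ℕ) (ht : t < ℓ) (d : Bool) :
    ((n : ℝ) ^ ℓ / 2) * ((n : ℝ) ^ ℓ / 2) ≤ (n : ℝ) ^ (ℓ + 1) * ((Sset f ℓ q t d).card : ℝ) := by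
  simp only [Fset, mem_filter, mem_univ, true_and] at hq
  obtain ⟨hviol, hst1, hst2⟩ := hq
  obtain ⟨i, hflip, -⟩ := hamming_flip hviol.1
  set e₁ : Cube n := if d then q.1 else q.2 with he₁
  set e₂ : Cube n := if d then q.2 else q.1 with he₂
  have he : e₂ = flipCoord e₁ i := by
    cases d
    · simp only [he₁, he₂, if_neg, Bool.false_eq_true, if_false]
      rw [hflip, flipCoord_flip_flip]
    · simpa [he₁, he₂] using hflip
  have hse1 : sticky f ℓ e₁ := by cases d <;> simpa [he₁]
  have hse2 : sticky f ℓ e₂ := by cases d <;> simpa [he₂]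
  set Da := univ.filter fun a : Fin ℓ → Fin n => ∀ s, s < t → ¬ influentialStep f e₁ (List.ofFn a) s with hDa
  set Db := univ.filter fun b : Fin ℓ → Fin n => ∀ s, s < ℓ - 1 - t → ¬ influentialStep f e₂ (List.ofFn b) s with hDb
  have hA : (n : ℝ) ^ ℓ / 2 ≤ (Da.card : ℝ) := sticky_count hn hse1 t (le_of_lt ht)
  have hB : (n : ℝ) ^ ℓ / 2 ≤ (Db.card : ℝ) := sticky_count hn hse2 (ℓ - 1 - t) (by omega)
  -- the splicing map
  set Φ : ((Fin ℓ → Fin n) × (Fin ℓ → Fin n)) → Cube n × (Fin ℓ → Fin n) :=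
    fun ab => (posAt e₁ (List.ofFn ab.1) t, mkW t ht i ab.1 ab.2) with hΦ
  have himg : ∀ ab ∈ Da ×ˢ Db, Φ ab ∈ Sset f ℓ q t d := by
    rintro ⟨a, b⟩ hab
    simp only [Finset.mem_product, hDa, hDb, mem_filter, mem_univ, true_and] at hab
    obtain ⟨ha, hb⟩ := hab
    simp only [Sset, mem_filter, mem_univ, true_and, hΦ]
    refine ⟨mkW_at_t t ht i a b e₁, ?_, ?_⟩
    · have := mkW_suffix t ht i a b e₁ 0 (by omega)
      rw [posAt_zero] at this
      rw [show t + 1 + 0 = t + 1 from rfl] at this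
      rw [this, ← he]
    · intro s hsl hst
      rcases Nat.lt_or_ge s t with h | h
      · rw [mkW_infl_prefix f t ht i a b e₁ s h]
        exact ha _ (by omega)
      · have h' : t < s := by omega
        rw [mkW_infl_suffix f t ht i a b e₁ s h' hsl, ← he]
        exact hb _ (by omega)
  have hfiber : ∀ p ∈ (Da ×ˢ Db).image Φ,
      ((Da ×ˢ Db).filter fun ab => Φ ab = p).card ≤ n ^ (ℓ + 1) := by
    intro p _
    have hinj : ((Da ×ˢ Db).filter fun ab => Φ ab = p).card ≤
        (univ : Finset ((Fin (ℓ - t) → Fin n) × (Fin (t + 1) → Fin n))).card := by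
      apply Finset.card_le_card_of_injOn
        (fun ab => (fun j : Fin (ℓ - t) => ab.1 ⟨t + j.val, by omega⟩,
                    fun j : Fin (t + 1) => ab.2 ⟨(ℓ - 1 - t) + j.val, by omega⟩))
        (fun _ _ => mem_univ _)
      rintro ⟨a, b⟩ hab ⟨a', b'⟩ hab' heq
      simp only [Finset.coe_filter, Set.mem_setOf_eq] at hab hab'
      have hw : mkW t ht i a b = mkW t ht i a' b' := by
        have h1 : (Φ (a, b)).2 = (Φ (a', b')).2 := by rw [hab.2, hab'.2]
        simpa [hΦ] using h1
      have heq1 := congrArg Prod.fst heq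
      have heq2 := congrArg Prod.snd heq
      simp only at heq1 heq2
      have ha : a = a' := by
        funext s
        rcases Nat.lt_or_ge s.val t with h | h
        · have hu : t - 1 - s.val < ℓ := by omega
          have := congrFun hw ⟨t - 1 - s.val, hu⟩
          rw [mkW_lt t ht i a b ⟨t - 1 - s.val, hu⟩ (by simp; omega),
              mkW_lt t ht i a' b' ⟨t - 1 - s.val, hu⟩ (by simp; omega)] at this
          have hidx : (⟨t - 1 - (⟨t - 1 - s.val, hu⟩ : Fin ℓ).val, by omega⟩ : Fin ℓ) = s :=
            Fin.ext (by simp; omega)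
          rwa [hidx] at this
        · have hj : s.val - t < ℓ - t := by omega
          have := congrFun heq1 ⟨s.val - t, hj⟩
          simp only at this
          have hidx : (⟨t + (⟨s.val - t, hj⟩ : Fin (ℓ - t)).val, by omega⟩ : Fin ℓ) = s :=
            Fin.ext (by simp; omega)
          rwa [hidx] at this
      have hbeq : b = b' := by
        funext j
        rcases Nat.lt_or_ge j.val (ℓ - 1 - t) with h | h
        · have hu : t + 1 + j.val < ℓ := by omega
          have := congrFun hw ⟨t + 1 + j.val, hu⟩
          rw [mkW_gt t ht i a b ⟨t + 1 + j.val, hu⟩ (by simp; omega),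
              mkW_gt t ht i a' b' ⟨t + 1 + j.val, hu⟩ (by simp; omega)] at this
          have hidx : (⟨(⟨t + 1 + j.val, hu⟩ : Fin ℓ).val - t - 1, by omega⟩ : Fin ℓ) = j :=
            Fin.ext (by simp; omega)
          rwa [hidx] at this
        · have hj : j.val - (ℓ - 1 - t) < t + 1 := by omega
          have := congrFun heq2 ⟨j.val - (ℓ - 1 - t), hj⟩
          simp only at this
          have hidx : (⟨(ℓ - 1 - t) + (⟨j.val - (ℓ - 1 - t), hj⟩ : Fin (t + 1)).val, by omega⟩ : Fin ℓ) = j :=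
            Fin.ext (by simp; omega)
          rwa [hidx] at this
      rw [ha, hbeq]
    calc ((Da ×ˢ Db).filter fun ab => Φ ab = p).card
        ≤ (univ : Finset ((Fin (ℓ - t) → Fin n) × (Fin (t + 1) → Fin n))).card := hinj
      _ = n ^ (ℓ - t) * n ^ (t + 1) := by
          simp [Fintype.card_prod, Fintype.card_fun]
      _ = n ^ (ℓ + 1) := by rw [← pow_add]; congr 1; omega
  have hcard : (Da ×ˢ Db).card ≤ n ^ (ℓ + 1) * ((Da ×ˢ Db).image Φ).card :=
    Finset.card_le_mul_card_image _ _ hfiber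
  have himg2 : ((Da ×ˢ Db).image Φ).card ≤ (Sset f ℓ q t d).card :=
    Finset.card_le_card (fun p hp => by
      obtain ⟨ab, hab, rfl⟩ := Finset.mem_image.mp hp
      exact himg ab hab)
  have hprod : (Da ×ˢ Db).card = Da.card * Db.card := Finset.card_product _ _
  have hfinal : (Da.card : ℝ) * Db.card ≤ (n : ℝ) ^ (ℓ + 1) * ((Sset f ℓ q t d).card : ℝ) := by
    have := hcard.trans (Nat.mul_le_mul_left _ himg2)
    rw [hprod] at this
    exact_mod_cast this
  have h0 : (0 : ℝ) ≤ (n : ℝ) ^ ℓ / 2 := by positivity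
  calc ((n : ℝ) ^ ℓ / 2) * ((n : ℝ) ^ ℓ / 2)
      ≤ (Da.card : ℝ) * Db.card := by
        apply mul_le_mul hA hB h0 (le_trans h0 hA)
    _ ≤ _ := hfinal

lemma Fset_facts {n ℓ : ℕ} {f : Cube n → Bool} {q : Cube n × Cube n} (hq : q ∈ Fset f ℓ) :
    f q.1 = true ∧ f q.2 = false := by
  simp only [Fset, mem_filter, mem_univ, true_and] at hq
  exact ⟨hq.1.2.2.1, hq.1.2.2.2⟩


/-- for a length-`ℓ` walk from a uniform start, the probability of traversing some
edge of `F_ℓ` (the `ℓ`-sticky violating edges) while traversing no other influential edge is at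
least `(ℓ/(4n)) · |F_ℓ|/2^n`. -/
theorem walk_finds_sticky_violation (n ℓ : ℕ) (hn : 0 < n) (f : Cube n → Bool) :
    ((ℓ : ℝ) / (4 * n)) * ((Fset f ℓ).card : ℝ) / 2 ^ n
      ≤ ((univ.filter fun p : Cube n × (Fin ℓ → Fin n) =>
            ∃ q ∈ Fset f ℓ,
              (∃ t, t < ℓ ∧ matchAt p.1 (List.ofFn p.2) t q) ∧
              (∀ t, t < ℓ → influentialStep f p.1 (List.ofFn p.2) t →
                matchAt p.1 (List.ofFn p.2) t q)).card : ℝ)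
          / ((2 : ℝ) ^ n * (n : ℝ) ^ ℓ) := by
  set A := (univ.filter fun p : Cube n × (Fin ℓ → Fin n) =>
            ∃ q ∈ Fset f ℓ,
              (∃ t, t < ℓ ∧ matchAt p.1 (List.ofFn p.2) t q) ∧
              (∀ t, t < ℓ → influentialStep f p.1 (List.ofFn p.2) t →
                matchAt p.1 (List.ofFn p.2) t q)) with hA
  set I := (Fset f ℓ) ×ˢ ((range ℓ) ×ˢ (univ : Finset Bool)) with hI
  set S' : (Cube n × Cube n) × ℕ × Bool → Finset (Cube n × (Fin ℓ → Fin n)) :=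
    fun z => Sset f ℓ z.1 z.2.1 z.2.2 with hS'
  -- each S' z (z ∈ I) is contained in A
  have hsub : ∀ z ∈ I, S' z ⊆ A := by
    rintro ⟨q, t, d⟩ hz p hp
    simp only [hI, Finset.mem_product, Finset.mem_range, Finset.mem_univ, and_true] at hz
    obtain ⟨hqF, ht⟩ := hz
    simp only [hS', Sset, mem_filter, mem_univ, true_and] at hp
    obtain ⟨h1, h2, h3⟩ := hp
    have hmatch : matchAt p.1 (List.ofFn p.2) t q := by
      cases d
      · exact Or.inr ⟨by simpa using h1, by simpa using h2⟩
      · exact Or.inl ⟨by simpa using h1, by simpa using h2⟩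
    simp only [hA, mem_filter, mem_univ, true_and]
    refine ⟨q, hqF, ⟨t, ht, hmatch⟩, ?_⟩
    intro s hsℓ hinfl
    rcases eq_or_ne s t with rfl | hst
    · exact hmatch
    · exact absurd hinfl (h3 s hsℓ hst)
  -- the S' z for z ∈ I are pairwise disjoint
  have hdisj : ∀ z ∈ I, ∀ z' ∈ I, z ≠ z' → Disjoint (S' z) (S' z') := by
    rintro ⟨q, t, d⟩ hz ⟨q', t', d'⟩ hz' hne
    simp only [hI, Finset.mem_product, Finset.mem_range, Finset.mem_univ, and_true] at hz hz'
    obtain ⟨hqF, ht⟩ := hz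
    obtain ⟨hqF', ht'⟩ := hz'
    rw [Finset.disjoint_left]
    intro p hp hp'
    simp only [hS', Sset, mem_filter, mem_univ, true_and] at hp hp'
    obtain ⟨h1, h2, h3⟩ := hp
    obtain ⟨h1', h2', h3'⟩ := hp'
    obtain ⟨fq1, fq2⟩ := Fset_facts hqF
    obtain ⟨fq1', fq2'⟩ := Fset_facts hqF'
    have hinflt : influentialStep f p.1 (List.ofFn p.2) t := by
      rw [influentialStep, h1, h2]
      cases d <;> simp [fq1, fq2]
    have htt : t = t' := by
      by_contra hc
      exact h3' t ht hc hinflt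
    subst htt
    have hq1 : (if d = true then q.1 else q.2) = (if d' = true then q'.1 else q'.2) := by
      rw [← h1, ← h1']
    have hq2 : (if d = true then q.2 else q.1) = (if d' = true then q'.2 else q'.1) := by
      rw [← h2, ← h2']
    apply hne
    cases d <;> cases d' <;> simp only [if_pos, if_neg, Bool.false_eq_true, if_false, if_true] at hq1 hq2
    · rw [show q = q' from Prod.ext hq2 hq1]
    · exfalso; rw [hq2, fq2'] at fq1; exact Bool.false_ne_true fq1
    · exfalso; rw [hq1, fq2'] at fq1; exact Bool.false_ne_true fq1
    · rw [show q = q' from Prod.ext hq1 hq2]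
  -- summing the cards
  have hsum : ∑ z ∈ I, (S' z).card ≤ A.card := by
    rw [← Finset.card_biUnion hdisj]
    exact Finset.card_le_card (Finset.biUnion_subset.mpr hsub)
  -- lower bound each term
  have hkey : ∀ z ∈ I, ((n : ℝ) ^ ℓ / 2) * ((n : ℝ) ^ ℓ / 2) ≤ (n : ℝ) ^ (ℓ + 1) * ((S' z).card : ℝ) := by
    rintro ⟨q, t, d⟩ hz
    simp only [hI, Finset.mem_product, Finset.mem_range, Finset.mem_univ, and_true] at hz
    exact Sset_card hn f q hz.1 t hz.2 d
  have hIcard : (I.card : ℝ) = ((Fset f ℓ).card : ℝ) * (ℓ * 2) := by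
    simp [hI, Finset.card_product]
  have hmain : (I.card : ℝ) * (((n : ℝ) ^ ℓ / 2) * ((n : ℝ) ^ ℓ / 2))
      ≤ (n : ℝ) ^ (ℓ + 1) * (A.card : ℝ) := by
    calc (I.card : ℝ) * (((n : ℝ) ^ ℓ / 2) * ((n : ℝ) ^ ℓ / 2))
        = ∑ _z ∈ I, (((n : ℝ) ^ ℓ / 2) * ((n : ℝ) ^ ℓ / 2)) := by
          rw [Finset.sum_const, nsmul_eq_mul]
      _ ≤ ∑ z ∈ I, (n : ℝ) ^ (ℓ + 1) * ((S' z).card : ℝ) := Finset.sum_le_sum hkey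
      _ = (n : ℝ) ^ (ℓ + 1) * ∑ z ∈ I, ((S' z).card : ℝ) := by rw [Finset.mul_sum]
      _ ≤ (n : ℝ) ^ (ℓ + 1) * (A.card : ℝ) := by
          apply mul_le_mul_of_nonneg_left _ (by positivity)
          exact_mod_cast hsum
  -- final arithmetic
  have hnp : (0 : ℝ) < (n : ℝ) := by exact_mod_cast hn
  have hnl : (0 : ℝ) < (n : ℝ) ^ ℓ := by positivity
  have h2n : (0 : ℝ) < (2 : ℝ) ^ n := by positivity
  have hA0 : (0 : ℝ) ≤ (A.card : ℝ) := by positivity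
  rw [hIcard, pow_succ] at hmain
  rw [div_le_div_iff₀ h2n (by positivity), div_mul_eq_mul_div, div_mul_eq_mul_div,
    div_le_iff₀ (by positivity : (0:ℝ) < 4 * (n:ℝ))]
  nlinarith [mul_le_mul_of_nonneg_right hmain (le_of_lt h2n), mul_pos hnl h2n,
    mul_nonneg (mul_nonneg hA0 (le_of_lt h2n)) (le_of_lt hnp)]
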